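/- Let ρ > 1, Q > 0, and let integers M ≤ N be given with N ≥ 1. Let f be given on [-1, (ρ+ρ⁻¹)/2) by a Chebyshev series f(x) = Σ_{n≥0} a_n T_n(x) with |a_0| ≤ Q and |a_n| ≤ 2Q ρ^{-n} for n ≥ 1 (the series converges absolutely on this interval). Let c ∈ ℝ^{M+1} solve the (unperturbed) normal equations T_M(x^{equi})ᵀ T_M(x^{equi}) c = T_M(x^{equi})ᵀ f(x^{equi}) and set p_M(x) = Σ_{k=0}^M c_k T_k(x). Then for every x with 1 < x < (ρ+ρ⁻¹)/2, writing r = (x + √(x²−1))/ρ (so r < 1), |f(x) − p_M(x)| ≤ 2Q [ (N+1)^{1/2}(M+1) / (σ_{M+1}(T_M(x^{equi}))(ρ−1)) + r/(1−r) ] r^M. -/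

import Mathlib

open Matrix MeasureTheory
open scoped BigOperators

/-- Chebyshev polynomial of the first kind `T_n`, as a function `ℝ → ℝ`. -/
noncomputable def cheb (n : ℕ) (x : ℝ) : ℝ :=
  (Polynomial.Chebyshev.T ℝ (n : ℤ)).eval x

/-- The equally spaced grid `x_k = 2k/N - 1`, `k = 0, …, N`, on `[-1,1]`. -/
noncomputable def xequi (N : ℕ) (k : Fin (N + 1)) : ℝ :=
  2 * (k : ℝ) / (N : ℝ) - 1

/-- The `(N+1) × (M+1)` Chebyshev–Vandermonde matrix at the equally spaced grid. -/
noncomputable def chebVand (N M : ℕ) : Matrix (Fin (N + 1)) (Fin (M + 1)) ℝ :=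
  Matrix.of fun i j => cheb (j : ℕ) (xequi N i)

/-- The Euclidean norm of a vector in `ℝ^n`. -/
noncomputable def enorm2 {n : ℕ} (v : Fin n → ℝ) : ℝ :=
  Real.sqrt (∑ i, (v i) ^ 2)

/-- The smallest singular value of a matrix, as the infimum of `‖A v‖₂` over unit vectors. -/
noncomputable def sigmaMin {m n : ℕ} (A : Matrix (Fin m) (Fin n) ℝ) : ℝ :=
  sInf {r | ∃ v : Fin n → ℝ, enorm2 v = 1 ∧ r = enorm2 (A.mulVec v)}

/-- The largest singular value of a matrix, as the supremum of `‖A v‖₂` over unit vectors. -/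
noncomputable def sigmaMax {m n : ℕ} (A : Matrix (Fin m) (Fin n) ℝ) : ℝ :=
  sSup {r | ∃ v : Fin n → ℝ, enorm2 v = 1 ∧ r = enorm2 (A.mulVec v)}


section Aux
open Polynomial Polynomial.Chebyshev

lemma cheb_zero (x : ℝ) : cheb 0 x = 1 := by
  simp [cheb, Polynomial.Chebyshev.T_zero]

lemma cheb_one (x : ℝ) : cheb 1 x = x := by
  simp [cheb, Polynomial.Chebyshev.T_one]

lemma cheb_rec (n : ℕ) (x : ℝ) :
    cheb (n + 2) x = 2 * x * cheb (n + 1) x - cheb n x := by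
  have h : ((n + 2 : ℕ) : ℤ) = (n : ℤ) + 2 := by push_cast; ring
  rw [cheb, h, Polynomial.Chebyshev.T_add_two]
  push_cast [cheb]
  simp [Polynomial.eval_sub, Polynomial.eval_mul]

lemma cheb_abs_le_one (n : ℕ) {x : ℝ} (h1 : -1 ≤ x) (h2 : x ≤ 1) : |cheb n x| ≤ 1 := by
  have hx : Real.cos (Real.arccos x) = x := Real.cos_arccos h1 h2
  rw [cheb, ← hx, Polynomial.Chebyshev.T_real_cos]
  exact Real.abs_cos_le_one _

lemma cheb_explicit {x : ℝ} (hx : 1 ≤ x) (n : ℕ) :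
    cheb n x = ((x + Real.sqrt (x ^ 2 - 1)) ^ n + (x - Real.sqrt (x ^ 2 - 1)) ^ n) / 2 := by
  set s := x + Real.sqrt (x ^ 2 - 1) with hs
  set t := x - Real.sqrt (x ^ 2 - 1) with ht
  have hsq : Real.sqrt (x ^ 2 - 1) ^ 2 = x ^ 2 - 1 :=
    Real.sq_sqrt (by nlinarith)
  have hst : s * t = 1 := by rw [hs, ht]; nlinarith
  have hsum : s + t = 2 * x := by rw [hs, ht]; ring
  induction n using Nat.strong_induction_on with
  | _ n ih =>
    match n with
    | 0 => simp [cheb_zero]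
    | 1 => simp [cheb_one]; ring
    | (m + 2) =>
      rw [cheb_rec, ih (m + 1) (by omega), ih m (by omega)]
      linear_combination (-((s ^ (m + 1) + t ^ (m + 1)) / 2)) * hsum +
        ((s ^ m + t ^ m) / 2) * hst

lemma cheb_nonneg_ge_one {x : ℝ} (hx : 1 ≤ x) (n : ℕ) : 0 ≤ cheb n x := by
  rw [cheb_explicit hx n]
  have h1 : 0 ≤ Real.sqrt (x ^ 2 - 1) := Real.sqrt_nonneg _
  have h2 : Real.sqrt (x ^ 2 - 1) ≤ x := by
    have h3 := Real.sqrt_le_sqrt (show x ^ 2 - 1 ≤ x ^ 2 by linarith)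
    rwa [Real.sqrt_sq (by linarith : (0:ℝ) ≤ x)] at h3
  have h4 : (0:ℝ) ≤ (x + Real.sqrt (x ^ 2 - 1)) ^ n := pow_nonneg (by linarith) n
  have h5 : (0:ℝ) ≤ (x - Real.sqrt (x ^ 2 - 1)) ^ n := pow_nonneg (by linarith) n
  linarith

lemma cheb_abs_le {x : ℝ} (hx : 1 ≤ x) (n : ℕ) :
    |cheb n x| ≤ (x + Real.sqrt (x ^ 2 - 1)) ^ n := by
  rw [abs_of_nonneg (cheb_nonneg_ge_one hx n), cheb_explicit hx n]
  have h0 : 0 ≤ Real.sqrt (x ^ 2 - 1) := Real.sqrt_nonneg _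
  have hs1 : 1 ≤ x + Real.sqrt (x ^ 2 - 1) := by linarith
  have hsq : Real.sqrt (x ^ 2 - 1) ^ 2 = x ^ 2 - 1 := Real.sq_sqrt (by nlinarith)
  have hst : (x + Real.sqrt (x ^ 2 - 1)) * (x - Real.sqrt (x ^ 2 - 1)) = 1 := by nlinarith
  have ht0 : 0 ≤ x - Real.sqrt (x ^ 2 - 1) := by nlinarith
  have ht1 : x - Real.sqrt (x ^ 2 - 1) ≤ 1 := by nlinarith
  have h2 : (x - Real.sqrt (x ^ 2 - 1)) ^ n ≤ 1 := pow_le_one₀ ht0 ht1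
  have h3 : (1:ℝ) ≤ (x + Real.sqrt (x ^ 2 - 1)) ^ n := one_le_pow₀ hs1
  linarith


lemma T_coeff (n : ℕ) :
    (∀ k : ℕ, n < k → (T ℝ (n : ℤ)).coeff k = 0) ∧ (T ℝ (n : ℤ)).coeff n ≠ 0 := by
  induction n using Nat.strong_induction_on with
  | _ n ih =>
    match n with
    | 0 =>
      constructor
      · intro k hk; simp [T_zero, coeff_one]; omega
      · simp [T_zero]
    | 1 =>
      constructor
      · intro k hk
        simp [T_one, coeff_X]
        omega
      · simp [T_one, coeff_X]
    | (m + 2) =>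
      have hT : T ℝ ((m + 2 : ℕ) : ℤ) = 2 * X * T ℝ ((m + 1 : ℕ) : ℤ) - T ℝ ((m : ℕ) : ℤ) := by
        have h : ((m + 2 : ℕ) : ℤ) = (m : ℤ) + 2 := by push_cast; ring
        rw [h, T_add_two]
        norm_cast
      obtain ⟨h1z, h1n⟩ := ih (m + 1) (by omega)
      obtain ⟨h0z, h0n⟩ := ih m (by omega)
      have hco : ∀ k : ℕ, ((2 : ℝ[X]) * X * T ℝ ((m + 1 : ℕ) : ℤ)).coeff (k + 1)
          = 2 * (T ℝ ((m + 1 : ℕ) : ℤ)).coeff k := by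
        intro k
        rw [mul_assoc, Polynomial.coeff_ofNat_mul, Polynomial.coeff_X_mul]
      constructor
      · intro k hk
        obtain ⟨j, rfl⟩ : ∃ j, k = j + 1 := ⟨k - 1, by omega⟩
        rw [hT, coeff_sub, hco, h1z j (by omega), h0z (j+1) (by omega)]
        ring
      · rw [hT, coeff_sub, show m + 2 = (m + 1) + 1 from rfl, hco,
          h0z (m + 1 + 1) (by omega), sub_zero]
        exact mul_ne_zero two_ne_zero h1n

open Matrix

lemma xequi_inj (N : ℕ) (hN : 1 ≤ N) : Function.Injective (xequi N) := by
  intro i j h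
  have hN0 : (N : ℝ) ≠ 0 := Nat.cast_ne_zero.mpr (by omega)
  have : (i : ℝ) = (j : ℝ) := by
    rw [xequi, xequi, sub_left_inj, div_left_inj' hN0, mul_right_inj' two_ne_zero] at h
    exact_mod_cast h
  exact Fin.ext (by exact_mod_cast this)

lemma chebVand_inj (N M : ℕ) (hMN : M ≤ N) (hN : 1 ≤ N)
    (v : Fin (M + 1) → ℝ) (hv : (chebVand N M) *ᵥ v = 0) : v = 0 := by
  set P : ℝ[X] := ∑ j : Fin (M + 1), C (v j) * T ℝ ((j : ℕ) : ℤ) with hP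
  have heval : ∀ i : Fin (N + 1), P.eval (xequi N i) = 0 := by
    intro i
    have := congrFun hv i
    simp only [Matrix.mulVec, dotProduct, chebVand, Matrix.of_apply,
      Pi.zero_apply] at this
    rw [hP, Polynomial.eval_finset_sum]
    simpa [cheb, mul_comm] using this
  have hdeg : P.natDegree ≤ M := by
    refine Polynomial.natDegree_sum_le_of_forall_le _ _ (fun j _ => ?_)
    refine le_trans (Polynomial.natDegree_C_mul_le _ _) ?_
    refine le_trans (Polynomial.natDegree_le_iff_coeff_eq_zero.mpr ?_) (by omega : (j:ℕ) ≤ M)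
    exact fun m hm => (T_coeff (j : ℕ)).1 m hm
  have hP0 : P = 0 := by
    refine Polynomial.eq_zero_of_natDegree_lt_card_of_eval_eq_zero P (xequi_inj N hN) heval ?_
    simp only [Fintype.card_fin]
    omega
  by_contra hvne
  have hne : (Finset.univ.filter (fun j => v j ≠ 0)).Nonempty := by
    by_contra h
    apply hvne
    funext j
    show v j = 0
    by_contra hj
    exact h ⟨j, by simp [Finset.mem_filter, hj]⟩
  set m := (Finset.univ.filter (fun j => v j ≠ 0)).max' hne with hm
  have hvm : v m ≠ 0 := (Finset.mem_filter.mp ((Finset.univ.filter (fun j => v j ≠ 0)).max'_mem hne)).2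
  have hcoeff : P.coeff (m : ℕ) = v m * (T ℝ ((m : ℕ) : ℤ)).coeff (m : ℕ) := by
    rw [hP, Polynomial.finset_sum_coeff]
    rw [Finset.sum_eq_single m]
    · rw [Polynomial.coeff_C_mul]
    · intro j _ hjm
      rcases lt_or_gt_of_ne (fun h => hjm (Fin.ext (by exact_mod_cast h)) : (j:ℕ) ≠ (m:ℕ)) with h | h
      · rw [Polynomial.coeff_C_mul, (T_coeff (j : ℕ)).1 (m : ℕ) h, mul_zero]
      · have hj0 : v j = 0 := by
          by_contra hj
          have := Finset.le_max' (Finset.univ.filter (fun j => v j ≠ 0)) j (Finset.mem_filter.mpr ⟨Finset.mem_univ j, hj⟩)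
          rw [← hm] at this
          exact absurd (Fin.le_def.mp this) (by omega)
        rw [Polynomial.coeff_C_mul, hj0, zero_mul]
    · intro h; exact absurd (Finset.mem_univ m) h
  rw [hP0, Polynomial.coeff_zero] at hcoeff
  exact (T_coeff (m : ℕ)).2 (by
    rcases mul_eq_zero.mp hcoeff.symm with h | h
    · exact absurd h hvm
    · exact h)



lemma enorm2_nonneg {n : ℕ} (v : Fin n → ℝ) : 0 ≤ enorm2 v := Real.sqrt_nonneg _

lemma enorm2_eq_norm {n : ℕ} (v : Fin n → ℝ) :
    enorm2 v = ‖(WithLp.equiv 2 (Fin n → ℝ)).symm v‖ := by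
  rw [EuclideanSpace.norm_eq]
  simp only [WithLp.equiv_symm_apply, PiLp.toLp_apply, Real.norm_eq_abs, sq_abs]
  rfl

lemma enorm2_pos {n : ℕ} {v : Fin n → ℝ} (hv : v ≠ 0) : 0 < enorm2 v := by
  rw [enorm2_eq_norm]
  rw [norm_pos_iff]
  intro h
  apply hv
  have := congrArg (WithLp.equiv 2 (Fin n → ℝ)) h
  simpa using this

lemma enorm2_smul {n : ℕ} (t : ℝ) (v : Fin n → ℝ) : enorm2 (t • v) = |t| * enorm2 v := by
  have h : (WithLp.equiv 2 (Fin n → ℝ)).symm (t • v)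
      = t • (WithLp.equiv 2 (Fin n → ℝ)).symm v := rfl
  rw [enorm2_eq_norm, enorm2_eq_norm, h, norm_smul, Real.norm_eq_abs]

lemma abs_le_enorm2 {n : ℕ} (v : Fin n → ℝ) (k : Fin n) : |v k| ≤ enorm2 v := by
  rw [← Real.sqrt_sq_eq_abs]
  apply Real.sqrt_le_sqrt
  exact Finset.single_le_sum (fun i _ => sq_nonneg (v i)) (Finset.mem_univ k)


lemma sigmaMin_le {m n : ℕ} (A : Matrix (Fin m) (Fin n) ℝ) (v : Fin n → ℝ)
    (hv : enorm2 v = 1) : sigmaMin A ≤ enorm2 (A.mulVec v) :=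
  csInf_le ⟨0, fun r ⟨w, _, hw⟩ => hw ▸ enorm2_nonneg _⟩ ⟨v, hv, rfl⟩

lemma sigmaMin_pos {m n : ℕ} (A : Matrix (Fin m) (Fin n) ℝ) (hn : 0 < n)
    (hinj : ∀ v : Fin n → ℝ, A.mulVec v = 0 → v = 0) : 0 < sigmaMin A := by
  haveI : NeZero n := ⟨hn.ne'⟩
  set E := EuclideanSpace ℝ (Fin n)
  set g : E → ℝ := fun u => enorm2 (A.mulVec ((WithLp.equiv 2 (Fin n → ℝ)) u)) with hg
  have hgc : Continuous g := by
    have h1 : Continuous fun u : E => ∑ i, ((A.mulVec ((WithLp.equiv 2 (Fin n → ℝ)) u)) i) ^ 2 := by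
      simp only [Matrix.mulVec, dotProduct]
      apply continuous_finset_sum
      intro i _
      apply Continuous.pow
      apply continuous_finset_sum
      intro j _
      exact continuous_const.mul ((continuous_apply j).comp (PiLp.continuous_ofLp _ _))
    exact Real.continuous_sqrt.comp h1
  have hsp : (Metric.sphere (0 : E) 1).Nonempty := by
    refine ⟨EuclideanSpace.single ⟨0, hn⟩ (1:ℝ), ?_⟩
    rw [Metric.mem_sphere, dist_zero_right, EuclideanSpace.norm_single]
    norm_num
  obtain ⟨v₀, hv₀, hmin⟩ := (isCompact_sphere (0 : E) 1).exists_isMinOn hsp hgc.continuousOn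
  have hv₀n : enorm2 ((WithLp.equiv 2 (Fin n → ℝ)) v₀) = 1 := by
    rw [enorm2_eq_norm]
    simpa [Metric.mem_sphere] using hv₀
  have hgpos : 0 < g v₀ := by
    apply enorm2_pos
    intro h
    have : ((WithLp.equiv 2 (Fin n → ℝ)) v₀) = 0 := hinj _ h
    rw [this] at hv₀n
    simp [enorm2] at hv₀n
  refine lt_of_lt_of_le hgpos (le_csInf ⟨_, ⟨_, hv₀n, rfl⟩⟩ ?_)
  rintro r ⟨v, hv1, rfl⟩
  have hvmem : (WithLp.equiv 2 (Fin n → ℝ)).symm v ∈ Metric.sphere (0 : E) 1 := by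
    rw [Metric.mem_sphere, dist_zero_right, ← enorm2_eq_norm, hv1]
  exact hmin hvmem


lemma cheb_tail_bound {ρ Q : ℝ} (hρ : 1 < ρ) (hQ : 0 < Q) {a : ℕ → ℝ}
    (ha : ∀ n : ℕ, 1 ≤ n → |a n| ≤ 2 * Q * ρ ^ (-(n : ℤ))) (M : ℕ) {x F s : ℝ}
    (hsum : HasSum (fun n => a n * cheb n x) F)
    (hcheb : ∀ n : ℕ, |cheb n x| ≤ s ^ n) (hs : 0 ≤ s) (hr : s < ρ) :
    |F - ∑ k ∈ Finset.range (M + 1), a k * cheb k x| ≤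
      2 * Q * (s / ρ) ^ (M + 1) * (1 - s / ρ)⁻¹ := by
  have hρ0 : (0:ℝ) < ρ := by linarith
  set r := s / ρ with hrdef
  have hr0 : 0 ≤ r := div_nonneg hs hρ0.le
  have hr1 : r < 1 := (div_lt_one hρ0).mpr hr
  have htail : HasSum (fun n => a (n + (M + 1)) * cheb (n + (M + 1)) x)
      (F - ∑ k ∈ Finset.range (M + 1), a k * cheb k x) := by
    refine (hasSum_nat_add_iff (f := fun n => a n * cheb n x) (M + 1)).mpr ?_
    rwa [sub_add_cancel]
  have hB : HasSum (fun n => 2 * Q * r ^ (M + 1) * r ^ n)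
      (2 * Q * r ^ (M + 1) * (1 - r)⁻¹) :=
    (hasSum_geometric_of_lt_one hr0 hr1).mul_left _
  have hterm : ∀ n : ℕ, |a (n + (M + 1)) * cheb (n + (M + 1)) x|
      ≤ 2 * Q * r ^ (M + 1) * r ^ n := by
    intro n
    rw [abs_mul]
    have h1 : |a (n + (M + 1))| ≤ 2 * Q * ρ ^ (-((n + (M + 1) : ℕ) : ℤ)) :=
      ha _ (by omega)
    have h2 : |cheb (n + (M + 1)) x| ≤ s ^ (n + (M + 1)) := hcheb _
    have h3 : (0:ℝ) ≤ 2 * Q * ρ ^ (-((n + (M + 1) : ℕ) : ℤ)) := by positivity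
    calc |a (n + (M + 1))| * |cheb (n + (M + 1)) x|
        ≤ (2 * Q * ρ ^ (-((n + (M + 1) : ℕ) : ℤ))) * s ^ (n + (M + 1)) := by
          exact mul_le_mul h1 h2 (abs_nonneg _) h3
      _ = 2 * Q * r ^ (M + 1) * r ^ n := by
          have hρ0' : ρ ≠ 0 := ne_of_gt hρ0
          rw [_root_.zpow_neg, zpow_natCast, div_pow, div_pow]
          field_simp
          ring
  rw [abs_le]
  constructor
  · have := hasSum_le (g := fun n => a (n + (M + 1)) * cheb (n + (M + 1)) x)
      (fun n => neg_abs_le _ |>.trans' (neg_le_neg (hterm n))) (hB.neg) htail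
    simpa using this
  · exact hasSum_le (fun n => (le_abs_self _).trans (hterm n)) htail hB


lemma ls_bound {m n : ℕ} (A : Matrix (Fin m) (Fin n) ℝ) (d : Fin n → ℝ) (e : Fin m → ℝ)
    (h : (Aᵀ * A) *ᵥ d = Aᵀ *ᵥ e) : enorm2 (A *ᵥ d) ≤ enorm2 e := by
  set u := A *ᵥ d with hu
  have h1 : d ⬝ᵥ (Aᵀ *ᵥ u) = u ⬝ᵥ u := by
    rw [Matrix.dotProduct_mulVec, Matrix.vecMul_transpose]
  have h1' : d ⬝ᵥ (Aᵀ *ᵥ e) = u ⬝ᵥ e := by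
    rw [Matrix.dotProduct_mulVec, Matrix.vecMul_transpose]
  have h2 : Aᵀ *ᵥ u = Aᵀ *ᵥ e := by rw [hu, Matrix.mulVec_mulVec, h]
  have key : u ⬝ᵥ u = u ⬝ᵥ e := by rw [← h1, h2, h1']
  have hsum : ∀ w : Fin m → ℝ, u ⬝ᵥ w = ∑ i, u i * w i := fun w => rfl
  have hcs : u ⬝ᵥ e ≤ enorm2 u * enorm2 e := by
    have h4 := Finset.sum_mul_sq_le_sq_mul_sq Finset.univ u e
    have h5 := Real.sqrt_le_sqrt h4
    rw [Real.sqrt_sq_eq_abs] at h5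
    rw [hsum, enorm2, enorm2, ← Real.sqrt_mul (by positivity)]
    exact (le_abs_self _).trans h5
  have hsq : enorm2 u ^ 2 = u ⬝ᵥ u := by
    rw [enorm2, Real.sq_sqrt (by positivity), hsum]
    exact Finset.sum_congr rfl fun i _ => (pow_two (u i)).trans rfl
  have h6 : enorm2 u ^ 2 ≤ enorm2 u * enorm2 e := by rw [hsq, key]; exact hcs
  rcases eq_or_lt_of_le (Real.sqrt_nonneg (∑ i, u i ^ 2) : (0:ℝ) ≤ enorm2 u) with h7 | h7
  · have h8 : enorm2 u = 0 := h7.symm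
    rw [h8]; exact Real.sqrt_nonneg _
  · have h7' : (0:ℝ) < enorm2 u := h7
    rw [pow_two] at h6
    exact le_of_mul_le_mul_left h6 h7'

lemma sigmaMin_mulVec {m n : ℕ} (A : Matrix (Fin m) (Fin n) ℝ) (d : Fin n → ℝ) :
    sigmaMin A * enorm2 d ≤ enorm2 (A *ᵥ d) := by
  rcases eq_or_ne d 0 with rfl | hd
  · have h0 : enorm2 (0 : Fin n → ℝ) = 0 := by simp [enorm2]
    rw [h0, mul_zero]
    exact enorm2_nonneg _
  · have ht : 0 < enorm2 d := enorm2_pos hd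
    have hv : enorm2 ((enorm2 d)⁻¹ • d) = 1 := by
      rw [enorm2_smul, abs_of_pos (inv_pos.mpr ht), inv_mul_cancel₀ ht.ne']
    have h1 := sigmaMin_le A _ hv
    rw [Matrix.mulVec_smul, enorm2_smul, abs_of_pos (inv_pos.mpr ht)] at h1
    calc sigmaMin A * enorm2 d ≤ ((enorm2 d)⁻¹ * enorm2 (A *ᵥ d)) * enorm2 d :=
          mul_le_mul_of_nonneg_right h1 ht.le
      _ = enorm2 (A *ᵥ d) := by field_simp

end Aux


set_option maxHeartbeats 1000000 in
/-- **Theorem 6.1 of the paper**: noiseless extrapolation. If `f(x) = Σ a_n T_n(x)`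
with `|a_0| ≤ Q`, `|a_n| ≤ 2Qρ^{-n}` and `p_M = Σ c_k T_k` where `c` solves the
unperturbed normal equations at `N+1` equally spaced points, then for
`1 < x < (ρ+ρ⁻¹)/2` and `r = (x+√(x²−1))/ρ`,
`|f(x) − p_M(x)| ≤ 2Q [√(N+1)(M+1)/(σ_{M+1}(ρ−1)) + r/(1−r)] r^M`. -/

theorem noiseless_extrapolation (ρ Q : ℝ) (hρ : 1 < ρ) (hQ : 0 < Q)
    (M N : ℕ) (hMN : M ≤ N) (hN : 1 ≤ N)
    (f : ℝ → ℝ) (a : ℕ → ℝ)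
    (hf : ∀ x ∈ Set.Ico (-1 : ℝ) ((ρ + ρ⁻¹) / 2),
      HasSum (fun n : ℕ => a n * cheb n x) (f x))
    (ha0 : |a 0| ≤ Q)
    (ha : ∀ n : ℕ, 1 ≤ n → |a n| ≤ 2 * Q * ρ ^ (-(n : ℤ)))
    (c : Fin (M + 1) → ℝ)
    (hc : ((chebVand N M).transpose * chebVand N M) *ᵥ c =
      (chebVand N M).transpose *ᵥ (fun i => f (xequi N i))) :
    ∀ x ∈ Set.Ioo (1 : ℝ) ((ρ + ρ⁻¹) / 2),
      |f x - ∑ k : Fin (M + 1), c k * cheb (k : ℕ) x| ≤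
        2 * Q * (Real.sqrt ((N : ℝ) + 1) * ((M : ℝ) + 1) /
              (sigmaMin (chebVand N M) * (ρ - 1)) +
            ((x + Real.sqrt (x ^ 2 - 1)) / ρ) / (1 - (x + Real.sqrt (x ^ 2 - 1)) / ρ)) *
          ((x + Real.sqrt (x ^ 2 - 1)) / ρ) ^ M := by
  intro x hx
  obtain ⟨hx1, hx2⟩ := hx
  have hρ0 : (0:ℝ) < ρ := by linarith
  have hρ1 : ρ - 1 ≠ 0 := by intro h; linarith [(sub_eq_zero.mp h)]
  have hρinv : ρ * ρ⁻¹ = 1 := mul_inv_cancel₀ hρ0.ne'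
  set s := x + Real.sqrt (x ^ 2 - 1) with hsdef
  have hsq0 : 0 ≤ Real.sqrt (x ^ 2 - 1) := Real.sqrt_nonneg _
  have hs1 : 1 ≤ s := by rw [hsdef]; linarith
  have hxρ : x < ρ := by nlinarith
  have hsρ : s < ρ := by
    rw [hsdef]
    have h1 : Real.sqrt (x ^ 2 - 1) < ρ - x := by
      rw [show ρ - x = Real.sqrt ((ρ - x) ^ 2) by rw [Real.sqrt_sq (by linarith)]]
      apply Real.sqrt_lt_sqrt (by nlinarith)
      nlinarith
    linarith
  set r := s / ρ with hrdef
  have hr0 : 0 ≤ r := div_nonneg (by linarith) hρ0.le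
  have hr1 : r < 1 := (div_lt_one hρ0).mpr hsρ
  have hr1' : (0:ℝ) < 1 - r := by linarith
  -- tail bound at x
  have hchebx : ∀ n : ℕ, |cheb n x| ≤ s ^ n := fun n => cheb_abs_le (by linarith) n
  have hsumx := hf x ⟨by linarith, hx2⟩
  have tailx := cheb_tail_bound hρ hQ ha M hsumx hchebx (by linarith) hsρ
  -- grid tail bounds
  have hmid : (1:ℝ) < (ρ + ρ⁻¹) / 2 := lt_trans hx1 hx2
  have hgrid : ∀ i : Fin (N + 1), -1 ≤ xequi N i ∧ xequi N i ≤ 1 := by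
    intro i
    have hN0 : (0:ℝ) < (N:ℝ) := by exact_mod_cast Nat.pos_of_ne_zero (by omega)
    have hi0 : (0:ℝ) ≤ (i:ℝ) := Nat.cast_nonneg _
    have hiN : (i:ℝ) ≤ (N:ℝ) := by
      have : (i:ℕ) ≤ N := by omega
      exact_mod_cast this
    constructor
    · rw [xequi]
      have h2 : 0 ≤ 2 * (i:ℝ) / (N:ℝ) := by positivity
      linarith
    · rw [xequi]
      have h2 : 2 * (i:ℝ) / (N:ℝ) ≤ 2 := by rw [div_le_iff₀ hN0]; linarith
      linarith
  have hcheb1 : ∀ i : Fin (N + 1), ∀ n : ℕ, |cheb n (xequi N i)| ≤ (1:ℝ) ^ n := by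
    intro i n
    rw [one_pow]
    exact cheb_abs_le_one n (hgrid i).1 (hgrid i).2
  have tailg : ∀ i : Fin (N + 1),
      |f (xequi N i) - ∑ k ∈ Finset.range (M + 1), a k * cheb k (xequi N i)| ≤
        2 * Q * (1 / ρ) ^ (M + 1) * (1 - 1 / ρ)⁻¹ := by
    intro i
    exact cheb_tail_bound hρ hQ ha M
      (hf (xequi N i) ⟨(hgrid i).1, by linarith [(hgrid i).2]⟩)
      (hcheb1 i) zero_le_one hρ
  set E := 2 * Q * (1 / ρ) ^ (M + 1) * (1 - 1 / ρ)⁻¹ with hEdef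
  have hEpos : 0 < E := by
    rw [hEdef]
    have h1 : (0:ℝ) < 1 - 1 / ρ := by
      rw [sub_pos, div_lt_one hρ0]; exact hρ
    positivity
  -- vectors
  set A := chebVand N M with hA
  set a' : Fin (M + 1) → ℝ := fun k => a (k : ℕ) with ha'
  set e : Fin (N + 1) → ℝ :=
    fun i => f (xequi N i) - ∑ k : Fin (M + 1), a (k : ℕ) * cheb (k : ℕ) (xequi N i) with he
  have hAa' : ∀ i, (A *ᵥ a') i = ∑ k : Fin (M + 1), a (k : ℕ) * cheb (k : ℕ) (xequi N i) := by
    intro i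
    simp only [hA, Matrix.mulVec, dotProduct, chebVand, Matrix.of_apply, ha']
    exact Finset.sum_congr rfl fun k _ => mul_comm _ _
  have heq : e = (fun i => f (xequi N i)) - A *ᵥ a' := by
    funext i
    simp only [he, Pi.sub_apply, hAa' i]
  set d : Fin (M + 1) → ℝ := c - a' with hd
  have hnormal : (Aᵀ * A) *ᵥ d = Aᵀ *ᵥ e := by
    rw [hd, heq, Matrix.mulVec_sub, Matrix.mulVec_sub, hc, Matrix.mulVec_mulVec]
  have hAd : enorm2 (A *ᵥ d) ≤ enorm2 e := ls_bound A d e hnormal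
  have hEe : ∀ i, |e i| ≤ E := by
    intro i
    rw [he]
    calc |f (xequi N i) - ∑ k : Fin (M + 1), a (k : ℕ) * cheb (k : ℕ) (xequi N i)|
        = |f (xequi N i) - ∑ k ∈ Finset.range (M + 1), a k * cheb k (xequi N i)| := by
          rw [Fin.sum_univ_eq_sum_range (fun k => a k * cheb k (xequi N i)) (M + 1)]
      _ ≤ E := tailg i
  have henorme : enorm2 e ≤ Real.sqrt ((N:ℝ) + 1) * E := by
    rw [enorm2]
    have h1 : ∑ i, (e i) ^ 2 ≤ ∑ _i : Fin (N + 1), E ^ 2 := by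
      refine Finset.sum_le_sum fun i _ => ?_
      rw [← sq_abs]
      exact pow_le_pow_left₀ (abs_nonneg _) (hEe i) 2
    refine le_trans (Real.sqrt_le_sqrt h1) ?_
    rw [Finset.sum_const, Finset.card_univ, Fintype.card_fin, nsmul_eq_mul]
    rw [show ((N + 1 : ℕ) : ℝ) = (N:ℝ) + 1 by push_cast; ring]
    rw [Real.sqrt_mul (by positivity), Real.sqrt_sq hEpos.le]
  have hinj := chebVand_inj N M hMN hN
  have hσ : 0 < sigmaMin A := sigmaMin_pos A (Nat.succ_pos M) hinj
  have hσd := sigmaMin_mulVec A d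
  have hdbound : enorm2 d ≤ Real.sqrt ((N:ℝ) + 1) * E / sigmaMin A := by
    rw [le_div_iff₀ hσ, mul_comm]
    exact le_trans hσd (le_trans hAd henorme)
  -- decomposition
  have hdecomp : f x - ∑ k : Fin (M + 1), c k * cheb (k : ℕ) x
      = (f x - ∑ k ∈ Finset.range (M + 1), a k * cheb k x)
        + ∑ k : Fin (M + 1), (a (k : ℕ) - c k) * cheb (k : ℕ) x := by
    rw [← Fin.sum_univ_eq_sum_range (fun k => a k * cheb k x) (M + 1)]
    have h2 : ∑ k : Fin (M + 1), (a (k : ℕ) - c k) * cheb (k : ℕ) x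
        = ∑ k : Fin (M + 1), a (k : ℕ) * cheb (k : ℕ) x
          - ∑ k : Fin (M + 1), c k * cheb (k : ℕ) x := by
      rw [← Finset.sum_sub_distrib]
      exact Finset.sum_congr rfl fun k _ => by ring
    rw [h2]
    ring
  have hterm2 : ∀ k : Fin (M + 1), |(a (k : ℕ) - c k) * cheb (k : ℕ) x|
      ≤ enorm2 d * s ^ M := by
    intro k
    rw [abs_mul]
    have h1 : |a (k : ℕ) - c k| ≤ enorm2 d := by
      have := abs_le_enorm2 d k
      rw [hd] at this ⊢
      simpa [abs_sub_comm] using this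
    have h2 : |cheb (k : ℕ) x| ≤ s ^ M :=
      le_trans (hchebx (k : ℕ)) (pow_le_pow_right₀ hs1 (by omega))
    exact mul_le_mul h1 h2 (abs_nonneg _) (le_trans (abs_nonneg _) h1)
  have hsum2 : |∑ k : Fin (M + 1), (a (k : ℕ) - c k) * cheb (k : ℕ) x|
      ≤ ((M:ℝ) + 1) * (enorm2 d * s ^ M) := by
    refine le_trans (Finset.abs_sum_le_sum_abs _ _) ?_
    refine le_trans (Finset.sum_le_sum fun k _ => hterm2 k) ?_
    rw [Finset.sum_const, Finset.card_univ, Fintype.card_fin, nsmul_eq_mul]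
    rw [show ((M + 1 : ℕ) : ℝ) = (M:ℝ) + 1 by push_cast; ring]
  -- final arithmetic
  have hkey1 : 2 * Q * r ^ (M + 1) * (1 - r)⁻¹ = 2 * Q * (r / (1 - r)) * r ^ M := by
    rw [pow_succ]
    field_simp
  have hkey2 : ((M:ℝ) + 1) * ((Real.sqrt ((N:ℝ) + 1) * E / sigmaMin A) * s ^ M)
      = 2 * Q * (Real.sqrt ((N:ℝ) + 1) * ((M:ℝ) + 1) / (sigmaMin A * (ρ - 1))) * r ^ M := by
    rw [hEdef, hrdef, div_pow]
    have h1 : (1:ℝ) - 1 / ρ = (ρ - 1) / ρ := by field_simp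
    rw [h1]
    field_simp
    rw [one_pow, one_mul, div_pow, pow_succ]
    field_simp
  calc |f x - ∑ k : Fin (M + 1), c k * cheb (k : ℕ) x|
      ≤ |f x - ∑ k ∈ Finset.range (M + 1), a k * cheb k x|
        + |∑ k : Fin (M + 1), (a (k : ℕ) - c k) * cheb (k : ℕ) x| := by
        rw [hdecomp]; exact abs_add_le _ _
    _ ≤ 2 * Q * r ^ (M + 1) * (1 - r)⁻¹ + ((M:ℝ) + 1) * (enorm2 d * s ^ M) :=
        add_le_add tailx hsum2
    _ ≤ 2 * Q * r ^ (M + 1) * (1 - r)⁻¹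
        + ((M:ℝ) + 1) * ((Real.sqrt ((N:ℝ) + 1) * E / sigmaMin A) * s ^ M) := by
        have hsM : (0:ℝ) ≤ s ^ M := pow_nonneg (by linarith) M
        have := mul_le_mul_of_nonneg_right hdbound hsM
        nlinarith [this]
    _ = 2 * Q * (Real.sqrt ((N:ℝ) + 1) * ((M:ℝ) + 1) / (sigmaMin A * (ρ - 1))
          + r / (1 - r)) * r ^ M := by
        rw [hkey2, hkey1]; ring
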